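/- Let (X_n)_{n∈ℕ} be a sequence of nonzero real or complex Banach spaces. If the ℓ^1-sum ℓ^1((X_n)_{n∈ℕ}) (sequences (x_n) with x_n ∈ X_n and norm Σ_n ‖x_n‖ < ∞) is lush, then each X_n is lush. -/

import Mathlib

open scoped BigOperators ENNReal

set_option maxHeartbeats 2000000

/-- The open slice `S(B_X, f, α) = {x ∈ B_X : Re f(x) > 1 - α}` of the closed unit ball. -/
def Slice (𝕜 : Type*) {X : Type*} [RCLike 𝕜] [NormedAddCommGroup X] [NormedSpace 𝕜 X]
    (f : X →L[𝕜] 𝕜) (α : ℝ) : Set X :=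
  {x | ‖x‖ ≤ 1 ∧ 1 - α < RCLike.re (f x)}

/-- The convex hull of `𝕋 · S(B_X, f, α)`, i.e. all convex combinations of rotated points of
the slice `S(B_X, f, α)`. -/
def ConvRotSlice (𝕜 : Type*) {X : Type*} [RCLike 𝕜] [NormedAddCommGroup X] [NormedSpace 𝕜 X]
    (f : X →L[𝕜] 𝕜) (α : ℝ) : Set X :=
  {x | ∃ (n : ℕ) (t : Fin n → ℝ) (ω : Fin n → 𝕜) (s : Fin n → X),
    (∀ k, 0 ≤ t k) ∧ (∑ k, t k) = 1 ∧ (∀ k, ‖ω k‖ = 1) ∧ (∀ k, s k ∈ Slice 𝕜 f α) ∧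
    x = ∑ k, ((t k : 𝕜) * ω k) • s k}

/-- A Banach space `X` over `𝕜 = ℝ` or `ℂ` is *lush* if for all `u, v` in the unit sphere and
every `ε > 0` there is a norm-one functional `f` with `u ∈ S(B_X, f, ε)` and
`dist(v, conv(𝕋 · S(B_X, f, ε))) < ε`. -/
def IsLush (𝕜 X : Type*) [RCLike 𝕜] [NormedAddCommGroup X] [NormedSpace 𝕜 X] : Prop :=
  ∀ u v : X, ‖u‖ = 1 → ‖v‖ = 1 → ∀ ε : ℝ, 0 < ε →
    ∃ f : X →L[𝕜] 𝕜, ‖f‖ = 1 ∧ u ∈ Slice 𝕜 f ε ∧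
      Metric.infDist v (ConvRotSlice 𝕜 f ε) < ε


section Aux
variable {𝕜 : Type*} [RCLike 𝕜] {X : ℕ → Type*}
  [∀ n, NormedAddCommGroup (X n)] [∀ n, NormedSpace 𝕜 (X n)]

lemma lush_single_add (n : ℕ) (a b : X n) :
    lp.single (E := X) (1:ℝ≥0∞) n (a + b) = lp.single 1 n a + lp.single 1 n b := by
  apply lp.ext
  funext j
  rw [lp.coeFn_add, Pi.add_apply]
  by_cases hj : j = n
  · subst hj; simp [lp.single_apply_self]
  · simp [lp.single_apply_ne _ _ _ hj]

lemma lush_norm_single (n : ℕ) (a : X n) :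
    ‖lp.single (E := X) (1:ℝ≥0∞) n a‖ = ‖a‖ := by
  classical
  have := lp.norm_single (E := X) (p := 1) (by simp) n a
  simpa using this

lemma lush_norm_sub_single (f : lp X (1:ℝ≥0∞)) (n : ℕ) :
    ‖f - lp.single 1 n (f n)‖ = ‖f‖ - ‖f n‖ := by
  have := lp.norm_compl_sum_single (p := 1) (E := X) (by simp) f {n}
  simpa using this

noncomputable def lushSingleCLM (𝕜 : Type*) [RCLike 𝕜] {X : ℕ → Type*}
    [∀ n, NormedAddCommGroup (X n)] [∀ n, NormedSpace 𝕜 (X n)] (n : ℕ) :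
    X n →L[𝕜] lp X 1 :=
  LinearMap.mkContinuous
    { toFun := fun a => lp.single 1 n a
      map_add' := lush_single_add n
      map_smul' := fun c a => lp.single_smul 1 n c a }
    1 (fun a => by
      show ‖lp.single (E := X) (1:ℝ≥0∞) n a‖ ≤ 1 * ‖a‖
      rw [lush_norm_single]; simp)

lemma lushSingleCLM_apply (n : ℕ) (a : X n) :
    lushSingleCLM 𝕜 n a = lp.single 1 n a := rfl

end Aux

/-- If the ℓ^1-sum of a sequence of nonzero Banach spaces is lush, then each summand is lush. -/
theorem isLush_of_isLush_lpOne {𝕜 : Type*} [RCLike 𝕜] {X : ℕ → Type*}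
    [∀ n, NormedAddCommGroup (X n)] [∀ n, NormedSpace 𝕜 (X n)]
    [∀ n, CompleteSpace (X n)] [∀ n, Nontrivial (X n)]
    (h : IsLush 𝕜 (lp X 1)) : ∀ n, IsLush 𝕜 (X n) := by
  classical
  intro n u v hu hv ε hε
  set m1 : ℝ := min ε 1 with hm1
  have hm1pos : 0 < m1 := lt_min hε one_pos
  have hm1le1 : m1 ≤ 1 := min_le_right _ _
  have hm1leε : m1 ≤ ε := min_le_left _ _
  set δ : ℝ := m1 / 3 with hδ
  set ε' : ℝ := m1 * m1 / 24 with hε'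
  have hδpos : 0 < δ := by positivity
  have hε'pos : 0 < ε' := by positivity
  have hε'le : ε' ≤ m1 / 24 := by nlinarith
  have hδle : δ ≤ 1/3 := by rw [hδ]; linarith
  -- apply lushness of the sum
  obtain ⟨F, hF, hsliceu', hdist⟩ :=
    h (lp.single 1 n u) (lp.single 1 n v)
      (by rw [lush_norm_single]; exact hu) (by rw [lush_norm_single]; exact hv) ε' hε'pos
  have hFu : 1 - ε' < RCLike.re (F (lp.single 1 n u)) := hsliceu'.2
  -- the pulled-back functional
  set f0 : X n →L[𝕜] 𝕜 := F.comp (lushSingleCLM 𝕜 n) with hf0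
  have hf0app : ∀ a : X n, f0 a = F (lp.single 1 n a) := fun a => rfl
  set c : ℝ := ‖f0‖ with hc
  have hcle : c ≤ 1 := by
    apply ContinuousLinearMap.opNorm_le_bound _ zero_le_one
    intro x
    rw [hf0app, one_mul]
    calc ‖F (lp.single 1 n x)‖ ≤ ‖F‖ * ‖lp.single (E := X) (1:ℝ≥0∞) n x‖ := F.le_opNorm _
      _ = ‖x‖ := by rw [hF, one_mul, lush_norm_single]
  have hcpos' : 1 - ε' < c := by
    have h1 : RCLike.re (f0 u) ≤ ‖f0 u‖ := RCLike.re_le_norm _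
    have h2 : ‖f0 u‖ ≤ c * ‖u‖ := f0.le_opNorm u
    rw [hu, mul_one] at h2
    have := hFu; rw [← hf0app] at this
    linarith
  have hc0 : 0 < c := by linarith
  have hcinv : 1 ≤ c⁻¹ := (one_le_inv₀ hc0).mpr hcle
  set f : X n →L[𝕜] 𝕜 := (c⁻¹ : ℝ) • f0 with hfdef
  have hfnorm : ‖f‖ = 1 := by
    have hns := norm_smul (α := ℝ) c⁻¹ f0
    rw [hfdef, hns, Real.norm_eq_abs, abs_of_pos (inv_pos.mpr hc0), ← hc,
      inv_mul_cancel₀ (ne_of_gt hc0)]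
  have hfre : ∀ a : X n, RCLike.re (f a) = c⁻¹ * RCLike.re (f0 a) := by
    intro a
    rw [hfdef]
    simp [RCLike.smul_re]
  have hkey : ∀ a : X n, 0 ≤ RCLike.re (f0 a) → RCLike.re (f0 a) ≤ RCLike.re (f a) := by
    intro a ha
    rw [hfre]
    exact le_mul_of_one_le_left ha hcinv
  -- u is in the slice of f
  have hf0u : 1 - ε' < RCLike.re (f0 u) := by rw [hf0app]; exact hFu
  have hε'lt1 : ε' < 1 := by linarith
  have huslice : u ∈ Slice 𝕜 f ε := by
    refine ⟨le_of_eq hu, ?_⟩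
    have h0 : (0:ℝ) ≤ RCLike.re (f0 u) := by linarith
    have := hkey u h0
    have hεε' : ε' ≤ ε := by linarith
    linarith
  -- get a convex combination close to `single v`
  have hne : (ConvRotSlice 𝕜 F ε').Nonempty := by
    refine ⟨lp.single 1 n u, 1, fun _ => 1, fun _ => 1, fun _ => lp.single 1 n u,
      fun _ => zero_le_one, by simp, fun _ => by simp, fun _ => hsliceu', by simp⟩
  obtain ⟨y, hyS, hdy⟩ := (Metric.infDist_lt_iff hne).mp hdist
  obtain ⟨N, t, ω, s, ht0, ht1, hω, hs, hy⟩ := hyS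
  set a : Fin N → ℝ := fun k => ‖(s k : ∀ m, X m) n‖ with ha
  have ha0 : ∀ k, 0 ≤ a k := fun k => norm_nonneg _
  have hale : ∀ k, a k ≤ 1 := fun k =>
    (lp.norm_apply_le_norm one_ne_zero (s k) n).trans (hs k).1
  -- the n-th coordinate of y
  have hyn : (y : ∀ m, X m) n = ∑ k, ((t k : 𝕜) * ω k) • ((s k : ∀ m, X m) n) := by
    rw [hy, lp.coeFn_sum, Finset.sum_apply]
    refine Finset.sum_congr rfl fun k _ => ?_
    rw [lp.coeFn_smul, Pi.smul_apply]
  have hvyn : ‖v - (y : ∀ m, X m) n‖ < ε' := by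
    have h1 : v - (y : ∀ m, X m) n = ((lp.single 1 n v - y : lp X 1) : ∀ m, X m) n := by
      rw [lp.coeFn_sub, Pi.sub_apply, lp.single_apply_self]
    rw [h1]
    refine lt_of_le_of_lt (lp.norm_apply_le_norm one_ne_zero _ n) ?_
    rwa [← dist_eq_norm]
  -- norms of slice points' n-th coordinates
  have hterm : ∀ k, ‖((t k : 𝕜) * ω k) • ((s k : ∀ m, X m) n)‖ = t k * a k := by
    intro k
    rw [norm_smul, norm_mul, RCLike.norm_ofReal, abs_of_nonneg (ht0 k), hω, mul_one]
  have hS1 : 1 - ε' < ∑ k, t k * a k := by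
    have h1 : ‖(y : ∀ m, X m) n‖ ≤ ∑ k, t k * a k := by
      rw [hyn]
      refine (norm_sum_le _ _).trans (le_of_eq ?_)
      exact Finset.sum_congr rfl fun k _ => hterm k
    have h2 : ‖v‖ - ‖(y : ∀ m, X m) n‖ ≤ ‖v - (y : ∀ m, X m) n‖ := norm_sub_norm_le _ _
    rw [hv] at h2
    linarith
  -- the slice condition pushes to the coordinate
  have hre0 : ∀ k, a k - ε' < RCLike.re (f0 ((s k : ∀ m, X m) n)) := by
    intro k
    have h2 : RCLike.re (F (s k)) - RCLike.re (f0 ((s k : ∀ m, X m) n)) ≤ 1 - a k := by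
      rw [hf0app]
      have hsub : RCLike.re (F (s k)) - RCLike.re (F (lp.single 1 n ((s k : ∀ m, X m) n)))
          = RCLike.re (F (s k) - F (lp.single 1 n ((s k : ∀ m, X m) n))) :=
        ((RCLike.re (K := 𝕜)).map_sub _ _).symm
      rw [hsub, ← map_sub F]
      calc RCLike.re (F (s k - lp.single 1 n ((s k : ∀ m, X m) n)))
          ≤ ‖F (s k - lp.single 1 n ((s k : ∀ m, X m) n))‖ := RCLike.re_le_norm _
        _ ≤ ‖s k - lp.single 1 n ((s k : ∀ m, X m) n)‖ := by
            simpa [hF] using F.le_opNorm (s k - lp.single 1 n ((s k : ∀ m, X m) n))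
        _ = ‖s k‖ - a k := lush_norm_sub_single (s k) n
        _ ≤ 1 - a k := by linarith [(hs k).1]
    have h3 := (hs k).2
    linarith
  -- split the index set
  have hsum_split : ∀ g : Fin N → ℝ,
      ∑ k, g k = (∑ k ∈ Finset.univ.filter (fun k => 1 - δ < a k), g k) +
        ∑ k ∈ Finset.univ.filter (fun k => ¬ (1 - δ < a k)), g k := by
    intro g
    exact (Finset.sum_filter_add_sum_filter_not Finset.univ _ g).symm
  set T : ℝ := ∑ k ∈ Finset.univ.filter (fun k => ¬ (1 - δ < a k)), t k with hT
  have hT0 : 0 ≤ T := Finset.sum_nonneg fun k _ => ht0 k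
  have hTδ : δ * T ≤ ε' := by
    have h1 : ∑ k, t k * (1 - a k) = 1 - ∑ k, t k * a k := by
      have he : ∑ k, t k * (1 - a k) = (∑ k, t k) - ∑ k, t k * a k := by
        rw [← Finset.sum_sub_distrib]
        exact Finset.sum_congr rfl fun k _ => by ring
      rw [he, ht1]
    have h2 : δ * T ≤ ∑ k ∈ Finset.univ.filter (fun k => ¬ (1 - δ < a k)), t k * (1 - a k) := by
      rw [hT, Finset.mul_sum]
      refine Finset.sum_le_sum fun k hk => ?_
      have hk' : ¬ (1 - δ < a k) := (Finset.mem_filter.mp hk).2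
      push_neg at hk'
      have h4 : δ ≤ 1 - a k := by linarith
      calc δ * t k = t k * δ := mul_comm _ _
        _ ≤ t k * (1 - a k) := mul_le_mul_of_nonneg_left h4 (ht0 k)
    have h3 : ∑ k ∈ Finset.univ.filter (fun k => ¬ (1 - δ < a k)), t k * (1 - a k)
        ≤ ∑ k, t k * (1 - a k) := by
      refine Finset.sum_le_sum_of_subset_of_nonneg (Finset.filter_subset _ _) fun k _ _ => ?_
      exact mul_nonneg (ht0 k) (by linarith [hale k])
    linarith
  set r : ℝ := 1 - ∑ k ∈ Finset.univ.filter (fun k => 1 - δ < a k), t k * a k with hr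
  have hr0 : 0 ≤ r := by
    have h1 : ∑ k ∈ Finset.univ.filter (fun k => 1 - δ < a k), t k * a k ≤ ∑ k, t k := by
      refine le_trans (Finset.sum_le_sum_of_subset_of_nonneg (Finset.filter_subset _ _)
        fun k _ _ => mul_nonneg (ht0 k) (ha0 k)) ?_
      exact Finset.sum_le_sum fun k _ => mul_le_of_le_one_right (ht0 k) (hale k)
    rw [hr, ht1] at *
    linarith
  have hrle : r ≤ T + ε' := by
    have h1 := hsum_split (fun k => t k * a k)
    have h2 : ∑ k ∈ Finset.univ.filter (fun k => ¬ (1 - δ < a k)), t k * a k ≤ T := by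
      rw [hT]
      exact Finset.sum_le_sum fun k _ => mul_le_of_le_one_right (ht0 k) (hale k)
    rw [hr]
    linarith
  -- the new convex combination in X n
  set t1 : Fin N → ℝ := fun k => if 1 - δ < a k then t k * a k else 0 with ht1'
  set s1 : Fin N → X n := fun k => if h : 1 - δ < a k
    then ((a k : 𝕜))⁻¹ • ((s k : ∀ m, X m) n) else u with hs1
  have hδε' : δ + ε' < m1 := by rw [hδ]; nlinarith
  have hs1mem : ∀ k, s1 k ∈ Slice 𝕜 f ε := by
    intro k
    simp only [hs1]
    by_cases hk : 1 - δ < a k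
    · rw [dif_pos hk]
      have hak0 : 0 < a k := by linarith
      constructor
      · rw [norm_smul, norm_inv, RCLike.norm_ofReal, abs_of_pos hak0, ha,
          inv_mul_cancel₀ (ne_of_gt hak0)]
      · have h1 : 0 < RCLike.re (f0 ((s k : ∀ m, X m) n)) := by
          have := hre0 k; linarith
        have h2 := hkey _ (le_of_lt h1)
        have h3 : RCLike.re (f (((a k : 𝕜))⁻¹ • ((s k : ∀ m, X m) n)))
            = (a k)⁻¹ * RCLike.re (f ((s k : ∀ m, X m) n)) := by
          rw [map_smul, smul_eq_mul, ← RCLike.ofReal_inv, RCLike.re_ofReal_mul]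
        have h4 : 1 ≤ (a k)⁻¹ := (one_le_inv₀ hak0).mpr (hale k)
        have h5 : 1 - δ - ε' < RCLike.re (f ((s k : ∀ m, X m) n)) := by
          have := hre0 k; linarith
        rw [h3]
        have hR0 : (0:ℝ) ≤ RCLike.re (f ((s k : ∀ m, X m) n)) := by linarith
        have h6 : RCLike.re (f ((s k : ∀ m, X m) n))
            ≤ (a k)⁻¹ * RCLike.re (f ((s k : ∀ m, X m) n)) :=
          le_mul_of_one_le_left hR0 h4
        linarith
    · rw [dif_neg hk]; exact huslice
  set w : X n := (∑ k, ((t1 k : 𝕜) * ω k) • s1 k) + ((r : 𝕜) * 1) • u with hw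
  have hwmem : w ∈ ConvRotSlice 𝕜 f ε := by
    refine ⟨N + 1, Fin.snoc t1 r, Fin.snoc ω 1, Fin.snoc s1 u, ?_, ?_, ?_, ?_, ?_⟩
    · intro k
      refine Fin.lastCases ?_ (fun j => ?_) k
      · rw [Fin.snoc_last]; exact hr0
      · rw [Fin.snoc_castSucc]
        simp only [ht1']
        by_cases hk : 1 - δ < a j
        · rw [if_pos hk]; exact mul_nonneg (ht0 j) (ha0 j)
        · rw [if_neg hk]
    · rw [Fin.sum_univ_castSucc]
      simp only [Fin.snoc_castSucc, Fin.snoc_last]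
      have he : ∑ j : Fin N, t1 j
          = ∑ k ∈ Finset.univ.filter (fun k => 1 - δ < a k), t k * a k := by
        simp only [ht1']
        rw [Finset.sum_ite, Finset.sum_const_zero, add_zero]
      rw [he, hr]; ring
    · intro k
      refine Fin.lastCases ?_ (fun j => ?_) k
      · rw [Fin.snoc_last]; simp
      · rw [Fin.snoc_castSucc]; exact hω j
    · intro k
      refine Fin.lastCases ?_ (fun j => ?_) k
      · rw [Fin.snoc_last]; exact huslice
      · rw [Fin.snoc_castSucc]; exact hs1mem j
    · rw [Fin.sum_univ_castSucc]
      simp only [Fin.snoc_castSucc, Fin.snoc_last]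
      exact hw
  -- the distance estimate
  have hA : ∑ k, ((t1 k : 𝕜) * ω k) • s1 k
      = ∑ k, (if 1 - δ < a k then ((t k : 𝕜) * ω k) • ((s k : ∀ m, X m) n) else 0) := by
    refine Finset.sum_congr rfl fun k _ => ?_
    simp only [ht1', hs1]
    by_cases hk : 1 - δ < a k
    · rw [if_pos hk, dif_pos hk, if_pos hk]
      have hak0 : 0 < a k := by linarith
      have hak : (a k : 𝕜) ≠ 0 := by
        simpa using ne_of_gt hak0
      rw [smul_smul]
      congr 1
      push_cast
      field_simp
    · rw [if_neg hk, dif_neg hk, if_neg hk]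
      simp
  have hyA : ‖(y : ∀ m, X m) n - ∑ k, ((t1 k : 𝕜) * ω k) • s1 k‖ ≤ T := by
    rw [hA, hyn]
    have h1 : ∑ k, ((t k : 𝕜) * ω k) • ((s k : ∀ m, X m) n)
        - ∑ k, (if 1 - δ < a k then ((t k : 𝕜) * ω k) • ((s k : ∀ m, X m) n) else 0)
        = ∑ k, (if 1 - δ < a k then 0 else ((t k : 𝕜) * ω k) • ((s k : ∀ m, X m) n)) := by
      rw [← Finset.sum_sub_distrib]
      refine Finset.sum_congr rfl fun k _ => ?_
      by_cases hk : 1 - δ < a k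
      · rw [if_pos hk, if_pos hk, sub_self]
      · rw [if_neg hk, if_neg hk, sub_zero]
    rw [h1]
    refine (norm_sum_le _ _).trans ?_
    have hb : ∀ k ∈ (Finset.univ : Finset (Fin N)),
        ‖if 1 - δ < a k then (0 : X n) else ((t k : 𝕜) * ω k) • ((s k : ∀ m, X m) n)‖
          ≤ (if 1 - δ < a k then 0 else t k) := by
      intro k _
      by_cases hk : 1 - δ < a k
      · rw [if_pos hk, if_pos hk, norm_zero]
      · rw [if_neg hk, if_neg hk, hterm k]
        exact mul_le_of_le_one_right (ht0 k) (hale k)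
    refine (Finset.sum_le_sum hb).trans ?_
    rw [Finset.sum_ite, Finset.sum_const_zero, zero_add, hT]
  have hdvw : dist v w < ε := by
    have h1 : v - w = (v - (y : ∀ m, X m) n)
        + ((y : ∀ m, X m) n - ∑ k, ((t1 k : 𝕜) * ω k) • s1 k) - ((r : 𝕜) * 1) • u := by
      rw [hw]; abel
    have h2 : ‖((r : 𝕜) * 1) • u‖ = r := by
      rw [mul_one, norm_smul, RCLike.norm_ofReal, abs_of_nonneg hr0, hu, mul_one]
    have h3 : dist v w ≤ ‖v - (y : ∀ m, X m) n‖
        + ‖(y : ∀ m, X m) n - ∑ k, ((t1 k : 𝕜) * ω k) • s1 k‖ + ‖((r : 𝕜) * 1) • u‖ := by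
      rw [dist_eq_norm, h1]
      refine (norm_sub_le _ _).trans ?_
      gcongr
      exact norm_add_le _ _
    rw [h2] at h3
    -- numeric wrap-up: dist ≤ ε' + T + r ≤ 2ε' + 2T, δ*T ≤ ε', δ = m1/3, ε' = m1²/24
    have hTbound : T ≤ m1 / 8 := by
      rw [hδ] at hTδ
      rw [hε'] at hTδ
      nlinarith
    have : dist v w ≤ 2 * ε' + 2 * T := by linarith
    have hfinal : 2 * ε' + 2 * T < ε := by
      rw [hε']
      nlinarith
    linarith
  refine ⟨f, hfnorm, huslice, ?_⟩
  calc Metric.infDist v (ConvRotSlice 𝕜 f ε) ≤ dist v w :=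
        Metric.infDist_le_dist_of_mem hwmem
    _ < ε := hdvw
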